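/- Let G be a finite group and p a prime with ε_p(G) = m. Then the derived length of a Sylow p-subgroup of G/Z(G) is at most m. -/

import Mathlib

open Subgroup

section EpsPAux

variable {p : ℕ}

/-- One step of the derived series, ambient version. -/
private def cstep {G : Type*} [Group G] (K : Subgroup G) : Subgroup G := ⁅K, K⁆

/-- Iterated commutator subgroup, computed in the ambient group. -/
private def dit {G : Type*} [Group G] (H : Subgroup G) (n : ℕ) : Subgroup G := cstep^[n] H

private lemma dit_zero {G : Type*} [Group G] (H : Subgroup G) : dit H 0 = H := rfl

private lemma dit_succ' {G : Type*} [Group G] (H : Subgroup G) (n : ℕ) :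
    dit H (n + 1) = ⁅dit H n, dit H n⁆ := Function.iterate_succ_apply' _ _ _

private lemma dit_succ {G : Type*} [Group G] (H : Subgroup G) (n : ℕ) :
    dit H (n + 1) = dit ⁅H, H⁆ n := Function.iterate_succ_apply _ _ _

private lemma dit_mono {G : Type*} [Group G] {H K : Subgroup G} (h : H ≤ K) (n : ℕ) :
    dit H n ≤ dit K n := by
  induction n with
  | zero => exact h
  | succ n ih => rw [dit_succ', dit_succ']; exact commutator_mono ih ih

private lemma dit_map {G G' : Type*} [Group G] [Group G'] (f : G →* G') (H : Subgroup G) (n : ℕ) :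
    dit (H.map f) n = (dit H n).map f := by
  induction n with
  | zero => rfl
  | succ n ih => rw [dit_succ', dit_succ', ih, Subgroup.map_commutator]

private lemma derivedSeries_eq_dit_top {G : Type*} [Group G] (n : ℕ) :
    derivedSeries G n = dit ⊤ n := by
  induction n with
  | zero => rfl
  | succ n ih => rw [derivedSeries_succ, dit_succ', ih]

private lemma map_subtype_derivedSeries {G : Type*} [Group G] (H : Subgroup G) (n : ℕ) :
    (derivedSeries H n).map H.subtype = dit H n := by
  induction n with
  | zero =>
    rw [dit_zero]
    show ((⊤ : Subgroup H).map H.subtype) = H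
    rw [← MonoidHom.range_eq_map, Subgroup.range_subtype]
  | succ n ih => rw [derivedSeries_succ, dit_succ', Subgroup.map_commutator, ih]

private lemma commutator_ne_top {Q : Type*} [Group Q] [Finite Q] [Nontrivial Q]
    (hp : p.Prime) (hQ : IsPGroup p Q) : commutator Q ≠ ⊤ := by
  intro h
  haveI : Fact p.Prime := ⟨hp⟩
  haveI hnil : Group.IsNilpotent Q := hQ.isNilpotent
  obtain ⟨n, hn⟩ := (inferInstance : Group.IsSolvable Q).solvable
  have htop : ∀ k, derivedSeries Q k = ⊤ := by
    intro k
    induction k with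
    | zero => rfl
    | succ k ihk => rw [derivedSeries_succ, ihk, ← _root_.commutator_def, h]
  rw [htop n] at hn
  obtain ⟨q, hq⟩ := exists_ne (1 : Q)
  exact hq ((Subgroup.eq_bot_iff_forall _).mp hn.symm.symm q (hn ▸ Subgroup.mem_top q))

universe uB in
private lemma lemB (hp : p.Prime) :
    ∀ (n : ℕ) (Q : Type uB) (_ : Group Q) (_ : Finite Q), IsPGroup p Q →
      Nat.card Q ∣ p ^ n → derivedSeries Q n = ⊥ := by
  intro n
  induction n with
  | zero =>
    intro Q _ _ _ hcard
    rw [pow_zero, Nat.dvd_one, Nat.card_eq_one_iff_unique] at hcard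
    haveI := hcard.1
    rw [Subgroup.eq_bot_iff_forall]
    intro x _
    exact Subsingleton.elim x 1
  | succ n ih =>
    intro Q _ _ hQ hcard
    rcases subsingleton_or_nontrivial Q with hs | hnt
    · rw [Subgroup.eq_bot_iff_forall]
      intro x _
      exact Subsingleton.elim x 1
    · have hne : commutator Q ≠ ⊤ := commutator_ne_top hp hQ
      have hH : commutator Q = commutator Q := rfl
      set H := commutator Q with hHdef
      have hsub : Nat.card ↥H ∣ Nat.card Q := Subgroup.card_subgroup_dvd_card H
      obtain ⟨a, hale, ha⟩ := (Nat.dvd_prime_pow hp).mp (hsub.trans hcard)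
      have han : a ≤ n := by
        by_contra hcon
        have ha1 : a = n + 1 := by omega
        have hcards : Nat.card ↥H = Nat.card Q := by
          refine Nat.dvd_antisymm hsub ?_
          have hHcard : Nat.card ↥H = p ^ (n + 1) := by rw [ha, ha1]
          exact hcard.trans (dvd_of_eq hHcard.symm)
        exact hne (Subgroup.eq_top_of_card_eq H hcards)
      have hdvd' : Nat.card ↥H ∣ p ^ n := by
        rw [ha]; exact pow_dvd_pow p han
      have hds := ih ↥H inferInstance inferInstance (hQ.to_subgroup H) hdvd'
      have heq : derivedSeries Q (n + 1) = dit H n := by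
        rw [derivedSeries_eq_dit_top, dit_succ, hHdef, commutator_def]
      rw [heq, ← map_subtype_derivedSeries, hds]
      exact Subgroup.map_bot _

private lemma lemA {P : Type*} [Group P] [Finite P] (hp : p.Prime) (hP : IsPGroup p P) :
    ∀ (k : ℕ) (H : Subgroup P), H.index ∣ p ^ k → derivedSeries P k ≤ H := by
  haveI : Fact p.Prime := ⟨hp⟩
  intro k
  induction k using Nat.strong_induction_on with
  | _ k ih =>
  intro H hdvd
  by_cases htop : H = ⊤
  · rw [htop]; exact le_top
  have hnc : NormalizerCondition P := normalizerCondition_of_isNilpotent (h := hP.isNilpotent)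
  have hlt : H < Subgroup.normalizer (H : Set P) := hnc H (lt_top_iff_ne_top.mpr htop)
  set N := Subgroup.normalizer (H : Set P) with hNdef
  have hHN : H ≤ N := Subgroup.le_normalizer
  have hmul : H.relIndex N * N.index = H.index := Subgroup.relIndex_mul_index hHN
  have hreldvd : H.relIndex N ∣ p ^ k :=
    dvd_trans (b := H.index) (Dvd.intro N.index hmul) hdvd
  obtain ⟨j, hjk, hj⟩ := (Nat.dvd_prime_pow hp).mp hreldvd
  have hj1 : 1 ≤ j := by
    rcases Nat.eq_zero_or_pos j with h0 | h1
    · exfalso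
      rw [h0, pow_zero] at hj
      exact (lt_iff_le_and_ne.mp hlt).2 (le_antisymm hHN (Subgroup.relIndex_eq_one.mp hj))
    · exact h1
  have hNdvd : N.index ∣ p ^ (k - j) := by
    have hNd : N.index ∣ p ^ k :=
      dvd_trans (b := H.index) (Dvd.intro_left (H.relIndex N) hmul) hdvd
    obtain ⟨i, hik, hi⟩ := (Nat.dvd_prime_pow hp).mp hNd
    have hdd : p ^ (j + i) ∣ p ^ k := by
      rw [pow_add, ← hj, ← hi, hmul]; exact hdvd
    have hji : j + i ≤ k := (Nat.pow_dvd_pow_iff_le_right hp.one_lt).mp hdd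
    rw [hi]; exact pow_dvd_pow p (by omega)
  have hdsN : derivedSeries P (k - j) ≤ N := ih (k - j) (by omega) N hNdvd
  haveI hnormal : (H.subgroupOf N).Normal := Subgroup.normal_in_normalizer
  have hcardq : Nat.card (↥N ⧸ H.subgroupOf N) ∣ p ^ j := by
    have h1 : Nat.card (↥N ⧸ H.subgroupOf N) = (H.subgroupOf N).index :=
      (Subgroup.index_eq_card _).symm
    have h2 : (H.subgroupOf N).index = H.relIndex N := rfl
    rw [h1, h2, hj]
  have hq : derivedSeries (↥N ⧸ H.subgroupOf N) j = ⊥ :=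
    lemB hp j _ inferInstance inferInstance ((hP.to_subgroup N).to_quotient _) hcardq
  have hNH : derivedSeries ↥N j ≤ H.subgroupOf N := by
    have hmapeq := map_derivedSeries_eq (f := QuotientGroup.mk' (H.subgroupOf N))
      (QuotientGroup.mk'_surjective (H.subgroupOf N)) j
    have hbot := (Subgroup.map_eq_bot_iff _).mp (hmapeq.trans hq)
    rwa [QuotientGroup.ker_mk'] at hbot
  calc derivedSeries P k = dit (derivedSeries P (k - j)) j := by
        rw [derivedSeries_eq_dit_top, derivedSeries_eq_dit_top]
        conv_lhs => rw [show k = j + (k - j) by omega]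
        exact Function.iterate_add_apply _ j (k - j) ⊤
    _ ≤ dit N j := dit_mono hdsN j
    _ = (derivedSeries ↥N j).map N.subtype := (map_subtype_derivedSeries N j).symm
    _ ≤ (H.subgroupOf N).map N.subtype := Subgroup.map_mono hNH
    _ = H ⊓ N := Subgroup.subgroupOf_map_subtype H N
    _ ≤ H := inf_le_left

private theorem cover_eq_top {G : Type*} [Group G] [Finite G] (K : Subgroup G)
    (h : ∀ g : G, ∃ x : G, x⁻¹ * g * x ∈ K) : K = ⊤ := by
  classical
  by_contra hne
  cases nonempty_fintype G
  set N := Subgroup.normalizer (K : Set G) with hNdef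
  have hKN : K ≤ N := Subgroup.le_normalizer
  haveI : Finite (G ⧸ N) := Quotient.finite _
  cases nonempty_fintype (G ⧸ N)
  cases nonempty_fintype ↥K
  let F : G ⧸ N → Finset G := fun q => Finset.univ.image (fun k : ↥K => q.out * (k : G) * q.out⁻¹)
  have hF1 : ∀ q, (1 : G) ∈ F q :=
    fun q => Finset.mem_image.mpr ⟨1, Finset.mem_univ _, by simp⟩
  have hFcard : ∀ q, (F q).card = Nat.card ↥K := by
    intro q
    rw [Finset.card_image_of_injective _ ?_, Finset.card_univ, Nat.card_eq_fintype_card]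
    intro a b hab
    have h1 : q.out * (a : G) = q.out * (b : G) := mul_right_cancel hab
    exact Subtype.ext (mul_left_cancel h1)
  have hcov : ∀ g : G, ∃ q, g ∈ F q := by
    intro g
    obtain ⟨x, hx⟩ := h g
    refine ⟨QuotientGroup.mk x, ?_⟩
    set y := (QuotientGroup.mk x : G ⧸ N).out with hy
    have hxy : (QuotientGroup.mk y : G ⧸ N) = QuotientGroup.mk x := Quotient.out_eq _
    have hmem : x⁻¹ * y ∈ N := by
      rw [← QuotientGroup.eq]
      exact hxy.symm
    have hk : y⁻¹ * g * y ∈ K := by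
      have hrw : y⁻¹ * g * y = (x⁻¹ * y)⁻¹ * (x⁻¹ * g * x) * ((x⁻¹ * y)⁻¹)⁻¹ := by group
      rw [hrw]
      exact (Subgroup.mem_normalizer_iff.mp (N.inv_mem hmem) _).mp hx
    refine Finset.mem_image.mpr ⟨⟨y⁻¹ * g * y, hk⟩, Finset.mem_univ _, ?_⟩
    show y * (y⁻¹ * g * y) * y⁻¹ = g
    group
  have hsubset : (Finset.univ : Finset G) ⊆
      insert 1 (Finset.univ.biUnion fun q => (F q).erase 1) := by
    intro g _
    by_cases hg : g = 1
    · simp [hg]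
    · obtain ⟨q, hq⟩ := hcov g
      exact Finset.mem_insert_of_mem
        (Finset.mem_biUnion.mpr ⟨q, Finset.mem_univ _, Finset.mem_erase.mpr ⟨hg, hq⟩⟩)
  have hcard1 : Fintype.card G ≤ 1 + Fintype.card (G ⧸ N) * (Nat.card ↥K - 1) := by
    calc Fintype.card G = (Finset.univ : Finset G).card := (Finset.card_univ).symm
      _ ≤ (insert 1 (Finset.univ.biUnion fun q => (F q).erase 1)).card :=
          Finset.card_le_card hsubset
      _ ≤ (Finset.univ.biUnion fun q => (F q).erase 1).card + 1 := Finset.card_insert_le _ _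
      _ ≤ (∑ q : G ⧸ N, ((F q).erase 1).card) + 1 :=
          Nat.add_le_add_right (Finset.card_biUnion_le) 1
      _ = (∑ _q : G ⧸ N, (Nat.card ↥K - 1)) + 1 := by
          congr 1
          refine Finset.sum_congr rfl fun q _ => ?_
          rw [Finset.card_erase_of_mem (hF1 q), hFcard q]
      _ = Fintype.card (G ⧸ N) * (Nat.card ↥K - 1) + 1 := by
          rw [Finset.sum_const, Finset.card_univ, smul_eq_mul]
      _ = 1 + Fintype.card (G ⧸ N) * (Nat.card ↥K - 1) := by omega
  -- arithmetic contradiction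
  have hcmul : Nat.card ↥K * K.index = Nat.card G := Subgroup.card_mul_index K
  have hNindex : Fintype.card (G ⧸ N) = N.index := by
    rw [Subgroup.index_eq_card, Nat.card_eq_fintype_card]
  have hNdvdK : N.index ∣ K.index := Subgroup.index_dvd_of_le hKN
  have hKpos : K.index ≠ 0 := Subgroup.index_ne_zero_of_finite
  have hNleK : N.index ≤ K.index := Nat.le_of_dvd (Nat.pos_of_ne_zero hKpos) hNdvdK
  have hKne1 : K.index ≠ 1 := fun h1 => hne (Subgroup.index_eq_one.mp h1)
  have hK2 : 2 ≤ K.index := by omega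
  have hc1 : 1 ≤ Nat.card ↥K := Nat.one_le_iff_ne_zero.mpr Nat.card_pos.ne'
  have hGcard : Fintype.card G = Nat.card G := (Nat.card_eq_fintype_card).symm
  have hmain : Nat.card ↥K * K.index ≤ 1 + N.index * (Nat.card ↥K - 1) := by
    rw [hcmul, ← hGcard, ← hNindex]
    exact hcard1
  have h1 : N.index * (Nat.card ↥K - 1) ≤ K.index * (Nat.card ↥K - 1) :=
    Nat.mul_le_mul_right _ hNleK
  have h2 : K.index * (Nat.card ↥K - 1) + K.index = K.index * Nat.card ↥K := by
    rw [← Nat.mul_succ]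
    congr 1
    omega
  have h3 : Nat.card ↥K * K.index = K.index * Nat.card ↥K := Nat.mul_comm _ _
  omega

end EpsPAux

/-- `εₚ(G)`: the largest `p`-exponent of a conjugacy class size
(equivalently, of the index of a centralizer) in `G`. -/
noncomputable def epsP (p : ℕ) (G : Type*) [Group G] : ℕ :=
  sSup {k | ∃ x : G, ((Subgroup.centralizer {x}).index).factorization p = k}

theorem derivedSeries_sylow_quotient_center_eq_bot {G : Type*} [Group G] [Finite G]
    (p : ℕ) [Fact p.Prime] (m : ℕ) (hm : epsP p G = m)
    (Q : Sylow p (G ⧸ Subgroup.center G)) :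
    derivedSeries (Q : Subgroup (G ⧸ Subgroup.center G)) m = ⊥ := by
  classical
  have hp : p.Prime := Fact.out
  haveI : Finite (Sylow p G) :=
    Finite.of_injective (fun (P : Sylow p G) => (P : Subgroup G))
      (fun P R h => Sylow.ext h)
  -- Step 1: every centralizer index has p-part at most m
  have hstep1 : ∀ g : G, ((Subgroup.centralizer {g}).index).factorization p ≤ m := by
    intro g
    rw [← hm]
    apply le_csSup
    · refine ⟨(Nat.card G).factorization p, ?_⟩
      rintro k ⟨x, rfl⟩
      have hdvd : (Subgroup.centralizer {x}).index ∣ Nat.card G :=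
        Subgroup.index_dvd_card (Subgroup.centralizer {x})
      have h0 : (Subgroup.centralizer {x}).index ≠ 0 := Subgroup.index_ne_zero_of_finite
      exact Finsupp.le_def.mp
        ((Nat.factorization_le_iff_dvd h0 Nat.card_pos.ne').mpr hdvd) p
    · exact ⟨g, rfl⟩
  obtain ⟨P₁⟩ := (Sylow.nonempty : Nonempty (Sylow p G))
  set D₀ : Subgroup G := dit (P₁ : Subgroup G) m with hD₀def
  set K := Subgroup.centralizer (D₀ : Set G) with hKdef
  -- Step 2: every element lies in a conjugate of K
  have hcov : ∀ g : G, ∃ x : G, x⁻¹ * g * x ∈ K := by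
    intro g
    set C := Subgroup.centralizer ({g} : Set G) with hCdef
    obtain ⟨S⟩ := (Sylow.nonempty : Nonempty (Sylow p ↥C))
    set S' : Subgroup G := (S : Subgroup ↥C).map C.subtype with hS'def
    have hS'p : IsPGroup p ↥S' := S.2.map C.subtype
    obtain ⟨R, hSR⟩ := hS'p.exists_le_sylow
    have hcS' : Nat.card ↥S' = p ^ (Nat.card ↥C).factorization p := by
      rw [← S.card_eq_multiplicity]
      exact Nat.card_congr
        (Subgroup.equivMapOfInjective (S : Subgroup ↥C) C.subtype
          C.subtype_injective).symm.toEquiv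
    have hcR : Nat.card ↥(R : Subgroup G) = p ^ (Nat.card G).factorization p :=
      R.card_eq_multiplicity
    have hfin : Nat.card ↥(S'.subgroupOf (R : Subgroup G)) *
        (S'.subgroupOf (R : Subgroup G)).index = Nat.card ↥(R : Subgroup G) :=
      Subgroup.card_mul_index _
    have hcsub : Nat.card ↥(S'.subgroupOf (R : Subgroup G)) = Nat.card ↥S' :=
      Nat.card_congr (Subgroup.subgroupOfEquivOfLe hSR).toEquiv
    have hcC : (Nat.card G).factorization p =
        C.index.factorization p + (Nat.card ↥C).factorization p := by
      have hmulC : Nat.card ↥C * C.index = Nat.card G := Subgroup.card_mul_index C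
      rw [← hmulC, Nat.factorization_mul Nat.card_pos.ne' Subgroup.index_ne_zero_of_finite]
      simp [add_comm]
    have hidx : (S'.subgroupOf (R : Subgroup G)).index ∣ p ^ m := by
      have heq : (S'.subgroupOf (R : Subgroup G)).index = p ^ (C.index.factorization p) := by
        have h := hfin
        rw [hcsub, hcS', hcR, hcC, pow_add, mul_comm] at h
        exact Nat.eq_of_mul_eq_mul_right (pow_pos hp.pos _) h
      rw [heq]
      exact pow_dvd_pow p (hstep1 g)
    have hds : derivedSeries ↥(R : Subgroup G) m ≤ S'.subgroupOf (R : Subgroup G) :=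
      lemA hp R.2 m _ hidx
    have hdR : dit (R : Subgroup G) m ≤ C := by
      calc dit (R : Subgroup G) m
          = (derivedSeries ↥(R : Subgroup G) m).map (R : Subgroup G).subtype :=
            (map_subtype_derivedSeries _ m).symm
        _ ≤ (S'.subgroupOf (R : Subgroup G)).map (R : Subgroup G).subtype :=
            Subgroup.map_mono hds
        _ = S' ⊓ (R : Subgroup G) := Subgroup.subgroupOf_map_subtype _ _
        _ ≤ S' := inf_le_left
        _ ≤ C := Subgroup.map_subtype_le _
    obtain ⟨x, hx⟩ := MulAction.exists_smul_eq G P₁ R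
    have hconj : (R : Subgroup G) = (P₁ : Subgroup G).map (MulAut.conj x).toMonoidHom := by
      rw [← hx]
      rfl
    have hDconj : dit (R : Subgroup G) m = D₀.map (MulAut.conj x).toMonoidHom := by
      rw [hconj, dit_map, hD₀def]
    rw [hDconj] at hdR
    refine ⟨x, ?_⟩
    rw [hKdef]
    rw [Subgroup.mem_centralizer_iff]
    intro d hd
    have hxd : x * d * x⁻¹ ∈ C := by
      apply hdR
      exact Subgroup.mem_map.mpr ⟨d, hd, rfl⟩
    have hcomm : g * (x * d * x⁻¹) = (x * d * x⁻¹) * g :=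
      Subgroup.mem_centralizer_iff.mp hxd g (Set.mem_singleton g)
    have hrw : d * (x⁻¹ * g * x) = x⁻¹ * ((x * d * x⁻¹) * g) * x := by group
    rw [hrw, ← hcomm]
    group
  have hKtop : K = ⊤ := cover_eq_top K hcov
  have hcent : D₀ ≤ Subgroup.center G := by
    intro d hd
    rw [Subgroup.mem_center_iff]
    intro g
    have hg : g ∈ K := hKtop ▸ Subgroup.mem_top g
    exact (Subgroup.mem_centralizer_iff.mp hg d hd).symm
  -- Step 3: push to the quotient
  have hsurj : Function.Surjective (QuotientGroup.mk' (Subgroup.center G)) :=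
    QuotientGroup.mk'_surjective _
  set Q₀ : Sylow p (G ⧸ Subgroup.center G) := P₁.mapSurjective hsurj with hQ₀def
  have hQ₀bot : dit (Q₀ : Subgroup (G ⧸ Subgroup.center G)) m = ⊥ := by
    have hcoe : (Q₀ : Subgroup (G ⧸ Subgroup.center G)) =
        (P₁ : Subgroup G).map (QuotientGroup.mk' (Subgroup.center G)) := rfl
    rw [hcoe, dit_map]
    rw [Subgroup.map_eq_bot_iff _, QuotientGroup.ker_mk']
    exact hcent
  obtain ⟨y, hy⟩ := MulAction.exists_smul_eq (G ⧸ Subgroup.center G) Q₀ Q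
  have hQbot : dit (Q : Subgroup (G ⧸ Subgroup.center G)) m = ⊥ := by
    have hconjQ : (Q : Subgroup (G ⧸ Subgroup.center G)) =
        (Q₀ : Subgroup (G ⧸ Subgroup.center G)).map (MulAut.conj y).toMonoidHom := by
      rw [← hy]
      rfl
    rw [hconjQ, dit_map, hQ₀bot, Subgroup.map_bot]
  have hfin2 : (derivedSeries ↥(Q : Subgroup (G ⧸ Subgroup.center G)) m).map
      (Q : Subgroup (G ⧸ Subgroup.center G)).subtype = ⊥ := by
    rw [map_subtype_derivedSeries]
    exact hQbot
  have hle := (Subgroup.map_eq_bot_iff _).mp hfin2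
  rw [Subgroup.ker_subtype] at hle
  exact le_bot_iff.mp hle
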